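/- Let p, q be coprime odd positive integers with p > q, q/p = [a_0, a_1, ..., a_n] (a_0 = 0, a_i > 0, a_n > 1), convergents q_i/p_i. Suppose n is odd and k ≤ -2 is an integer. Then (3p_{n-1} + p(3k-1)) / (3q_{n-1} + q(3k-1)) = [a_1, a_2, ..., a_{n-1}, a_n - 1, 1, |k| - 1, 3] (as rationals, where both numerator and denominator are negative so the fraction is positive). -/
import Mathlib


/-- Continued fraction value: `cf [a₀, a₁, ..., aₙ] = a₀ + 1/(a₁ + 1/(... + 1/aₙ))`. -/
def cf : List ℤ → ℚ
  | [] => 0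
  | [a] => (a : ℚ)
  | a :: l => (a : ℚ) + (cf l)⁻¹

/-- Auxiliary for the Bredon–Wood sum: carries previous `a`, previous `b`,
and the partial sum of the `b`'s. -/
def NsumAux : ℤ → ℤ → ℤ → List ℤ → ℤ
  | _, _, s, [] => s
  | pa, pb, s, a :: l =>
      NsumAux a (if pb = pa ∧ Even s then 0 else a)
        (s + (if pb = pa ∧ Even s then 0 else a)) l

/-- `Nsum [a₀,...,aₙ] = b₀ + ... + bₙ` where `b₀ = a₀` and
`bᵢ = 0` if `bᵢ₋₁ = aᵢ₋₁` and `b₀ + ... + bᵢ₋₁` is even, else `bᵢ = aᵢ`.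
The Bredon–Wood invariant is `N(x,y) = Nsum l / 2` for `l` the continued
fraction expansion of `x/y`. -/
def Nsum : List ℤ → ℤ
  | [] => 0
  | a :: l => NsumAux a a a l

/-- A valid continued fraction expansion: nonempty, `a₀ ≥ 0`,
`aᵢ > 0` for `i ≥ 1`, and the last term `> 1`. -/
def ValidCF (l : List ℤ) : Prop :=
  l ≠ [] ∧ 0 ≤ l.headI ∧ (∀ a ∈ l.tail, 0 < a) ∧ 1 < l.getLast!

lemma cf_cons (a : ℤ) (l : List ℤ) (h : l ≠ []) : cf (a :: l) = a + (cf l)⁻¹ := by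
  cases l with
  | nil => simp at h
  | cons b t => rfl

lemma cf_pos (l : List ℤ) (h : l ≠ []) (hpos : ∀ a ∈ l, 0 < a) : 0 < cf l := by
  induction l with
  | nil => simp at h
  | cons a t ih =>
    cases t with
    | nil => simpa [cf] using hpos a (by simp)
    | cons b s =>
      rw [cf_cons _ _ (by simp)]
      have h1 : 0 < cf (b :: s) := ih (by simp) (fun x hx => hpos x (by simp [hx]))
      have h2 : (0:ℚ) < a := by exact_mod_cast hpos a (by simp)
      positivity

lemma cf_key (a P Q : ℕ → ℤ)
    (hP0 : P 0 = 1) (hP1 : P 1 = a 1) (hPr : ∀ i, P (i+2) = a (i+2) * P (i+1) + P i)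
    (hQ0 : Q 0 = 0) (hQ1 : Q 1 = 1) (hQr : ∀ i, Q (i+2) = a (i+2) * Q (i+1) + Q i) :
    ∀ j, 1 ≤ j → (∀ i, 1 ≤ i → i ≤ j → 0 < a i) →
    ∀ m : List ℤ, m ≠ [] → (∀ b ∈ m, 0 < b) →
    cf ((List.ofFn fun i : Fin j => a (i+1)) ++ m)
      = (cf m * P j + P (j-1)) / (cf m * Q j + Q (j-1)) := by
  intro j hj
  induction j, hj using Nat.le_induction with
  | base =>
    intro hpos m hm hmpos
    have hx : 0 < cf m := cf_pos m hm hmpos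
    have hlist : (List.ofFn fun i : Fin 1 => a (i+1)) = [a 1] := by simp
    rw [hlist, List.singleton_append, cf_cons _ _ hm, hP1, hQ1, hP0, hQ0]
    push_cast
    field_simp
    ring
  | succ j hj ih =>
    intro hpos m hm hmpos
    have hx : 0 < cf m := cf_pos m hm hmpos
    have haj : 0 < a (j+1) := hpos (j+1) (by omega) le_rfl
    have hlist : (List.ofFn fun i : Fin (j+1) => a (i+1))
        = (List.ofFn fun i : Fin j => a (i+1)) ++ [a (j+1)] := by
      rw [List.ofFn_succ']
      simp [List.concat_eq_append, Fin.castSucc]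
    rw [hlist, List.append_assoc, List.singleton_append]
    have hm' : ∀ b ∈ a (j+1) :: m, 0 < b := by
      intro b hb
      rcases List.mem_cons.mp hb with rfl | hb
      · exact haj
      · exact hmpos b hb
    rw [ih (fun i h1 h2 => hpos i h1 (by omega)) (a (j+1) :: m) (by simp) hm']
    have hy : cf (a (j+1) :: m) = a (j+1) + (cf m)⁻¹ := cf_cons _ _ hm
    obtain ⟨i, rfl⟩ : ∃ i, j = i + 1 := ⟨j - 1, by omega⟩
    rw [hy]
    simp only [Nat.add_sub_cancel, hPr i, hQr i]
    rw [show ((i+1+1) : ℕ) = i + 2 from rfl]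
    have hnum : (cf m * ((a (i+2) * P (i+1) + P i : ℤ) : ℚ) + (P (i+1) : ℚ))
        = cf m * ((((a (i+2) : ℤ) : ℚ) + (cf m)⁻¹) * P (i+1) + P i) := by
      push_cast
      field_simp
      ring
    have hden : (cf m * ((a (i+2) * Q (i+1) + Q i : ℤ) : ℚ) + (Q (i+1) : ℚ))
        = cf m * ((((a (i+2) : ℤ) : ℚ) + (cf m)⁻¹) * Q (i+1) + Q i) := by
      push_cast
      field_simp
      ring
    rw [hnum, hden, mul_div_mul_left _ _ hx.ne']

lemma cf_tail (c k : ℤ) (hk : k ≤ -2) :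
    cf [c - 1, 1, (k.natAbs : ℤ) - 1, 3] * (3 * k - 1) = c * (3 * k - 1) + 3 := by
  have hkQ : (k : ℚ) ≤ -2 := by exact_mod_cast hk
  simp only [cf]
  push_cast
  rw [abs_of_nonpos (by linarith : (k:ℚ) ≤ 0)]
  have e1 : -(k:ℚ) - 1 + (3:ℚ)⁻¹ = (-3*k - 2)/3 := by ring
  rw [e1, inv_div]
  have hA : ((-3:ℚ)*k - 2) ≠ 0 := by intro h; nlinarith
  have e2 : (1:ℚ) + 3 / (-3*(k:ℚ) - 2) = (1 - 3*k)/(-3*k - 2) := by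
    rw [eq_div_iff hA, add_mul, div_mul_cancel₀ _ hA]
    ring
  rw [e2, inv_div]
  have hB : ((1:ℚ) - 3*k) ≠ 0 := by intro h; nlinarith
  field_simp
  ring


theorem crosscap_stmt15 (p q n : ℕ) (a P Q : ℕ → ℤ) (k : ℤ)
    (hq : 0 < q) (hqp : q < p) (hcop : Nat.Coprime p q) (hpodd : Odd p) (hqodd : Odd q)
    (h0 : a 0 = 0) (hpos : ∀ i, 1 ≤ i → i ≤ n → 0 < a i) (hlast : 1 < a n)
    (hcf : cf (List.ofFn fun i : Fin (n+1) => a i) = (q : ℚ) / p)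
    (hP0 : P 0 = 1) (hP1 : P 1 = a 1) (hPr : ∀ i, P (i+2) = a (i+2) * P (i+1) + P i)
    (hQ0 : Q 0 = 0) (hQ1 : Q 1 = 1) (hQr : ∀ i, Q (i+2) = a (i+2) * Q (i+1) + Q i)
    (hPn : P n = p) (hQn : Q n = q) (hnodd : Odd n) (hk : k ≤ -2) :
    ((3 * P (n-1) + (p : ℤ) * (3 * k - 1) : ℤ) : ℚ) /
        ((3 * Q (n-1) + (q : ℤ) * (3 * k - 1) : ℤ) : ℚ)
      = cf ((List.ofFn fun i : Fin (n-1) => a (i+1)) ++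
          [a n - 1, 1, (k.natAbs : ℤ) - 1, 3]) := by

  have h3k : ((3:ℚ) * k - 1) ≠ 0 := by
    have : (k:ℚ) ≤ -2 := by exact_mod_cast hk
    intro h; nlinarith
  have hxt := cf_tail (a n) k hk
  rcases Nat.lt_or_ge n 2 with h2 | h2
  · -- n = 1 (n = 0 impossible since n is odd)
    obtain rfl : n = 1 := by rcases hnodd with ⟨t, ht⟩; omega
    have hp : (p : ℤ) = a 1 := by rw [← hPn, hP1]
    have hq : (q : ℤ) = 1 := by rw [← hQn, hQ1]
    have hl : ((List.ofFn fun i : Fin (1-1) => a (i+1))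
        ++ [a 1 - 1, 1, ((k.natAbs : ℤ) - 1), 3])
        = [a 1 - 1, 1, ((k.natAbs : ℤ) - 1), 3] := rfl
    have e1 : ((3 * P 0 + (p:ℤ) * (3*k-1) : ℤ) : ℚ)
        = (a 1 : ℚ) * (3*(k:ℚ)-1) + 3 := by
      rw [hP0, hp]; push_cast; ring
    have e2 : ((3 * Q 0 + (q:ℤ) * (3*k-1) : ℤ) : ℚ) = 3*(k:ℚ)-1 := by
      rw [hQ0, hq]; push_cast; ring
    rw [show (1:ℕ) - 1 = 0 from rfl, hl, e1, e2, eq_comm, eq_div_iff h3k]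
    exact hxt
  · obtain ⟨m, rfl⟩ : ∃ m, n = m + 2 := ⟨n - 2, by omega⟩
    have hml : ([a (m+2) - 1, 1, ((k.natAbs : ℤ) - 1), 3] : List ℤ) ≠ [] := by simp
    have hmpos : ∀ b ∈ ([a (m+2) - 1, 1, ((k.natAbs : ℤ) - 1), 3] : List ℤ), 0 < b := by
      intro b hb
      have hka : (2:ℤ) ≤ (k.natAbs : ℤ) := by
        rw [Int.ofNat_natAbs_of_nonpos (by omega : k ≤ 0)]; omega
      simp only [List.mem_cons, List.mem_singleton] at hb
      rcases hb with rfl | rfl | rfl | hb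
      · omega
      · omega
      · omega
      · simp at hb; omega
    rw [show (m+2) - 1 = m + 1 from rfl]
    rw [cf_key a P Q hP0 hP1 hPr hQ0 hQ1 hQr (m+1) (by omega)
      (fun i h1 h2 => hpos i h1 (by omega)) _ hml hmpos]
    set x : ℚ := cf [a (m+2) - 1, 1, ((k.natAbs : ℤ) - 1), 3] with hxdef
    simp only [Nat.add_sub_cancel]
    have hpint : (a (m+2) : ℚ) * (P (m+1) : ℚ) + (P m : ℚ) = (p : ℚ) := by
      have := hPr m
      rw [hPn] at this  -- hPn : P (m+2) = p ; this : ↑p = ...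
      exact_mod_cast this.symm
    have hqint : (a (m+2) : ℚ) * (Q (m+1) : ℚ) + (Q m : ℚ) = (q : ℚ) := by
      have := hQr m
      rw [hQn] at this
      exact_mod_cast this.symm
    have hxq : x * (3 * (k:ℚ) - 1) = (a (m+2) : ℚ) * (3 * k - 1) + 3 := by
      push_cast at hxt; exact_mod_cast hxt
    have hnum : ((3 * P (m+1) + (p : ℤ) * (3 * k - 1) : ℤ) : ℚ)
        = (3 * (k:ℚ) - 1) * (x * (P (m+1) : ℚ) + (P m : ℚ)) := by
      push_cast
      linear_combination (-(P (m+1) : ℚ)) * hxq - (3*(k:ℚ)-1) * hpint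
    have hden : ((3 * Q (m+1) + (q : ℤ) * (3 * k - 1) : ℤ) : ℚ)
        = (3 * (k:ℚ) - 1) * (x * (Q (m+1) : ℚ) + (Q m : ℚ)) := by
      push_cast
      linear_combination (-(Q (m+1) : ℚ)) * hxq - (3*(k:ℚ)-1) * hqint
    rw [hnum, hden, mul_div_mul_left _ _ h3k]
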